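/- Let n, m, k : ℕ, let Φ_X : Matrix (Fin n) (Fin k) ℝ with Φ_Xᵀ * Φ_X invertible, let Φ_Y : Matrix (Fin m) (Fin k) ℝ, and let Π : Matrix (Fin n) (Fin m) ℝ. Define the functional map C := (Φ_Xᵀ * Φ_X)⁻¹ * Φ_Xᵀ * Π * Φ_Y (i.e., C = Φ_X† * Π * Φ_Y) and the aligning transformation A := Cᵀ. Then A solves the embedding-alignment least-squares problem: for every B : Matrix (Fin k) (Fin k) ℝ, ∑ i, ∑ j, ((Φ_X * Aᵀ - Π * Φ_Y) i j)^2 ≤ ∑ i, ∑ j, ((Φ_X * Bᵀ - Π * Φ_Y) i j)^2. In other words, the optimal linear transformation aligning the embedding Φ_X with the pulled-back embedding Π * Φ_Y is the transpose of the functional map matrix C in the opposite direction. -/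
import Mathlib


open Matrix

/-- The transpose of the functional map `C = Φ_X† * Pmap * Φ_Y` solves the
embedding-alignment least-squares problem `min_A ‖Φ_X * Aᵀ - Π * Φ_Y‖_F²`. -/
theorem adjoint_is_transpose_of_functional_map {n m k : ℕ}
    (ΦX : Matrix (Fin n) (Fin k) ℝ) (hΦX : IsUnit (ΦXᵀ * ΦX))
    (ΦY : Matrix (Fin m) (Fin k) ℝ) (Pmap : Matrix (Fin n) (Fin m) ℝ)
    (C : Matrix (Fin k) (Fin k) ℝ) (hC : C = (ΦXᵀ * ΦX)⁻¹ * ΦXᵀ * Pmap * ΦY)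
    (A : Matrix (Fin k) (Fin k) ℝ) (hA : A = Cᵀ)
    (B : Matrix (Fin k) (Fin k) ℝ) :
    ∑ i, ∑ j, ((ΦX * Aᵀ - Pmap * ΦY) i j) ^ 2 ≤
      ∑ i, ∑ j, ((ΦX * Bᵀ - Pmap * ΦY) i j) ^ 2 := by
  subst hC hA
  set M := ΦX with hM
  set E := Pmap * ΦY with hE
  set P := (Mᵀ * M)⁻¹ * Mᵀ * Pmap * ΦY with hP
  have hAt : ((Mᵀ * M)⁻¹ * Mᵀ * Pmap * ΦY)ᵀᵀ = P := by rw [transpose_transpose]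
  rw [hAt]
  set R := M * P - E with hR
  set D := Bᵀ - P with hD
  have hdet : IsUnit (Mᵀ * M).det := (Matrix.isUnit_iff_isUnit_det _).mp hΦX
  have hinv : (Mᵀ * M) * (Mᵀ * M)⁻¹ = 1 := Matrix.mul_nonsing_inv _ hdet
  have hnormal : Mᵀ * R = 0 := by
    have : Mᵀ * (M * P) = Mᵀ * E := by
      rw [hP, hE, ← Matrix.mul_assoc, ← Matrix.mul_assoc, ← Matrix.mul_assoc,
        ← Matrix.mul_assoc, hinv, Matrix.one_mul, Matrix.mul_assoc]
    rw [hR, Matrix.mul_sub, this, sub_self]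
  have hRM : Rᵀ * M = 0 := by
    have := congrArg Matrix.transpose hnormal
    simpa [Matrix.transpose_mul] using this
  have hdecomp : M * Bᵀ - E = R + M * D := by
    rw [hR, hD, Matrix.mul_sub]; abel
  have hcross : ∑ i, ∑ j, R i j * (M * D) i j = 0 := by
    have h1 : ∑ i, ∑ j, R i j * (M * D) i j = Matrix.trace (Rᵀ * (M * D)) := by
      rw [Matrix.trace]
      simp only [Matrix.diag, Matrix.mul_apply, Matrix.transpose_apply]
      rw [Finset.sum_comm]
    rw [h1, ← Matrix.mul_assoc, hRM, Matrix.zero_mul, Matrix.trace_zero]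
  have expand : ∑ i, ∑ j, ((R + M * D) i j) ^ 2 =
      (∑ i, ∑ j, (R i j) ^ 2 + ∑ i, ∑ j, ((M * D) i j) ^ 2)
        + 2 * ∑ i, ∑ j, R i j * (M * D) i j := by
    have h : ∀ i j, ((R + M * D) i j) ^ 2 =
        ((R i j) ^ 2 + ((M * D) i j) ^ 2) + 2 * (R i j * (M * D) i j) := by
      intro i j; simp only [Matrix.add_apply]; ring
    simp_rw [h, Finset.sum_add_distrib, Finset.mul_sum]
  rw [hdecomp, expand, hcross, mul_zero, add_zero, hR]
  exact le_add_of_nonneg_right (by positivity)
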